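/- Let n₁, n₂, k be positive integers with k ≤ n₂ ≤ n₁ and (k+1)·(n₁ mod n₂) < ⌊n₁/n₂⌋·n₂, and let 0 ≤ α ≤ 1 be real. If there exists an (n₂,k,α)-bisector F, then there exists an (n₁,k,α)-bisector of size at most (k+1)·|F|. -/

import Mathlib

open Finset

/-- An `(n,k,α)`-bisector: every function maps exactly `⌈α·n⌉` elements to `1`,
and every `k`-subset of `[n]` is mapped entirely to `0` by some function. -/
def IsBisector (n k : ℕ) (α : ℝ) (F : Finset (Fin n → Fin 2)) : Prop :=
  (∀ f ∈ F, (Finset.univ.filter fun x => f x = 1).card = ⌈α * (n : ℝ)⌉₊) ∧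
  ∀ S : Finset (Fin n), S.card = k → ∃ f ∈ F, ∀ x ∈ S, f x = 0

set_option maxHeartbeats 1600000

/-- If `k ≤ n₂ ≤ n₁`, `(k+1)·(n₁ mod n₂) < ⌊n₁/n₂⌋·n₂` and there is an
`(n₂,k,α)`-bisector `F`, then there is an `(n₁,k,α)`-bisector of size at most
`(k+1)·|F|`. -/
theorem bisector_extend_universe (n₁ n₂ k : ℕ) (hk : 0 < k) (hkn : k ≤ n₂)
    (hn : n₂ ≤ n₁) (hmod : (k + 1) * (n₁ % n₂) < n₁ / n₂ * n₂)
    (α : ℝ) (hα0 : 0 ≤ α) (hα1 : α ≤ 1)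
    (F : Finset (Fin n₂ → Fin 2)) (hF : IsBisector n₂ k α F) :
    ∃ F' : Finset (Fin n₁ → Fin 2),
      IsBisector n₁ k α F' ∧ F'.card ≤ (k + 1) * F.card := by
  classical
  have hn2pos : 0 < n₂ := lt_of_lt_of_le hk hkn
  have hn1pos : 0 < n₁ := lt_of_lt_of_le hn2pos hn
  haveI : NeZero n₁ := ⟨hn1pos.ne'⟩
  set q := n₁ / n₂ with hqdef
  set r := n₁ % n₂ with hrdef
  set QN := q * n₂ with hQNdef
  have hqr : QN + r = n₁ := by
    rw [hQNdef, hqdef, hrdef, Nat.mul_comm]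
    exact Nat.div_add_mod n₁ n₂
  set m₁ := ⌈α * (n₁ : ℝ)⌉₊ with hm₁def
  set m₂ := ⌈α * (n₂ : ℝ)⌉₊ with hm₂def
  set M := q * m₂ with hMdef
  -- The key numeric inequality `m₁ ≤ q·m₂ + r`.
  have h1 : m₁ ≤ M + r := by
    rw [hm₁def, hMdef]
    refine Nat.ceil_le.mpr ?_
    have hceil : α * n₂ ≤ (m₂ : ℝ) := by rw [hm₂def]; exact Nat.le_ceil _
    have hcast : (n₁ : ℝ) = (q : ℝ) * (n₂ : ℝ) + (r : ℝ) := by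
      have h := hqr
      rw [hQNdef] at h
      exact_mod_cast h.symm
    have h2 : (q : ℝ) * (α * n₂) ≤ (q : ℝ) * (m₂ : ℝ) :=
      mul_le_mul_of_nonneg_left hceil (by positivity)
    have h3 : α * (r : ℝ) ≤ (r : ℝ) := mul_le_of_le_one_left (by positivity) hα1
    have h4 : α * (n₁ : ℝ) = (q : ℝ) * (α * n₂) + α * r := by rw [hcast]; ring
    push_cast
    linarith
  set e := m₁ - M with hedef
  have he : e ≤ r := by omega
  have hm1e : m₁ - e ≤ M := by omega
  have hk1e : (k + 1) * e ≤ n₁ :=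
    calc (k + 1) * e ≤ (k + 1) * r := Nat.mul_le_mul_left _ he
      _ ≤ QN := le_of_lt hmod
      _ ≤ n₁ := Nat.le.intro hqr
  -- the `C`-part pullback of the one-set of `f`
  set B : (Fin n₂ → Fin 2) → Finset (Fin n₁) := fun f =>
    univ.filter fun x : Fin n₁ =>
      (x : ℕ) < QN ∧ f ⟨(x : ℕ) % n₂, Nat.mod_lt _ hn2pos⟩ = 1 with hBdef
  have cardB : ∀ f : Fin n₂ → Fin 2,
      (B f).card = q * (univ.filter fun i => f i = 1).card := by
    intro f
    have : (B f).card = ((range q) ×ˢ (univ.filter fun i => f i = 1)).card := by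
      refine Finset.card_bij'
        (fun x _ => ((x : ℕ) / n₂, (⟨(x : ℕ) % n₂, Nat.mod_lt _ hn2pos⟩ : Fin n₂)))
        (fun p hp => (⟨p.1 * n₂ + (p.2 : ℕ), ?_⟩ : Fin n₁)) ?_ ?_ ?_ ?_
      · -- bound for j
        have hp1 : p.1 ∈ range q := (Finset.mem_product.mp hp).1
        have h1' : p.1 + 1 ≤ q := Nat.succ_le_of_lt (Finset.mem_range.mp hp1)
        have h2' : p.1 * n₂ + (p.2 : ℕ) < (p.1 + 1) * n₂ := by
          rw [Nat.succ_mul]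
          exact Nat.add_lt_add_left p.2.isLt _
        have h3' : (p.1 + 1) * n₂ ≤ QN := by
          rw [hQNdef]; exact Nat.mul_le_mul_right _ h1'
        exact lt_of_lt_of_le (lt_of_lt_of_le h2' h3') (Nat.le.intro hqr)
      · -- i maps into the product
        intro x hx
        rw [hBdef, Finset.mem_filter] at hx
        refine Finset.mem_product.mpr ⟨Finset.mem_range.mpr ?_, ?_⟩
        · exact (Nat.div_lt_iff_lt_mul hn2pos).mpr (by rw [← hQNdef]; exact hx.2.1)
        · simpa using hx.2.2
      · -- j maps into B f
        intro p hp
        have hp1 : p.1 ∈ range q := (Finset.mem_product.mp hp).1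
        have hp2 := (Finset.mem_product.mp hp).2
        rw [hBdef, Finset.mem_filter]
        refine ⟨Finset.mem_univ _, ?_, ?_⟩
        · show p.1 * n₂ + (p.2 : ℕ) < QN
          have h1' : p.1 + 1 ≤ q := Nat.succ_le_of_lt (Finset.mem_range.mp hp1)
          have h2' : p.1 * n₂ + (p.2 : ℕ) < (p.1 + 1) * n₂ := by
            rw [Nat.succ_mul]
            exact Nat.add_lt_add_left p.2.isLt _
          have h3' : (p.1 + 1) * n₂ ≤ QN := by
            rw [hQNdef]; exact Nat.mul_le_mul_right _ h1'
          exact lt_of_lt_of_le h2' h3'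
        · have hmodv : (p.1 * n₂ + (p.2 : ℕ)) % n₂ = (p.2 : ℕ) := by
            rw [Nat.mul_comm p.1 n₂, Nat.mul_add_mod]
            exact Nat.mod_eq_of_lt p.2.isLt
          have : (⟨(p.1 * n₂ + (p.2 : ℕ)) % n₂, Nat.mod_lt _ hn2pos⟩ : Fin n₂) = p.2 :=
            Fin.ext hmodv
          rw [this]
          simpa using (Finset.mem_filter.mp hp2).2
      · -- left inverse
        intro x hx
        apply Fin.ext
        show (x : ℕ) / n₂ * n₂ + (x : ℕ) % n₂ = (x : ℕ)
        rw [Nat.mul_comm]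
        exact Nat.div_add_mod _ _
      · -- right inverse
        intro p hp
        have hp2 := (Finset.mem_product.mp hp).2
        have hmodv : (p.1 * n₂ + (p.2 : ℕ)) % n₂ = (p.2 : ℕ) := by
          rw [Nat.mul_comm p.1 n₂, Nat.mul_add_mod]
          exact Nat.mod_eq_of_lt p.2.isLt
        have hdivv : (p.1 * n₂ + (p.2 : ℕ)) / n₂ = p.1 := by
          rw [Nat.add_comm, Nat.add_mul_div_right _ _ hn2pos,
            Nat.div_eq_of_lt p.2.isLt, Nat.zero_add]
        exact Prod.ext hdivv (Fin.ext hmodv)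
    rw [this, Finset.card_product, Finset.card_range]
  -- the extra-ones window E = [QN, QN + e)
  set E : Finset (Fin n₁) :=
    univ.filter (fun x : Fin n₁ => QN ≤ (x : ℕ) ∧ (x : ℕ) < QN + e) with hEdef
  have cardE : E.card = e := by
    have : E.card = (range e).card := by
      refine Finset.card_bij'
        (fun x _ => (x : ℕ) - QN)
        (fun t ht => (⟨QN + t, ?_⟩ : Fin n₁)) ?_ ?_ ?_ ?_
      · have ht' : t < e := Finset.mem_range.mp ht
        omega
      · intro x hx
        rw [hEdef, Finset.mem_filter] at hx
        obtain ⟨-, hb1, hb2⟩ := hx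
        refine Finset.mem_range.mpr ?_
        show (x : ℕ) - QN < e
        omega
      · intro t ht
        have ht' : t < e := Finset.mem_range.mp ht
        rw [hEdef, Finset.mem_filter]
        exact ⟨Finset.mem_univ _, by simp, by simpa using ht'⟩
      · intro x hx
        rw [hEdef, Finset.mem_filter] at hx
        obtain ⟨-, hb1, hb2⟩ := hx
        apply Fin.ext
        show QN + ((x : ℕ) - QN) = (x : ℕ)
        omega
      · intro t ht
        simp
    rw [this, Finset.card_range]
  -- choose the trimmed pullback P f
  have hPex : ∀ f : {x // x ∈ F}, ∃ Pf : Finset (Fin n₁), Pf ⊆ B f.1 ∧ Pf.card = m₁ - e := by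
    intro f
    apply Finset.exists_subset_card_eq
    rw [cardB f.1]
    have := hF.1 f.1 f.2
    rw [← hm₂def] at this
    rw [this, ← hMdef]
    exact hm1e
  choose P hPsub hPcard using hPex
  -- the shift amounts
  set c : Fin (k + 1) → Fin n₁ :=
    fun j => (⟨((j : ℕ) * e) % n₁, Nat.mod_lt _ hn1pos⟩ : Fin n₁) with hcdef
  -- the one-sets of the new functions
  set O : {x // x ∈ F} → Fin (k + 1) → Finset (Fin n₁) :=
    fun f j => (P f ∪ E).image (fun x => x + c j) with hOdef
  have hdisjPE : ∀ f, Disjoint (P f) E := by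
    intro f
    rw [Finset.disjoint_left]
    intro a haP haE
    have h1' := (Finset.mem_filter.mp (hPsub f haP)).2.1
    have h2' := (Finset.mem_filter.mp haE).2.1
    omega
  have cardO : ∀ f j, (O f j).card = m₁ := by
    intro f j
    rw [hOdef]
    rw [Finset.card_image_of_injective _ (add_left_injective (c j)),
      Finset.card_union_of_disjoint (hdisjPE f), hPcard, cardE]
    omega
  -- the new family
  set F' : Finset (Fin n₁ → Fin 2) :=
    (F.attach ×ˢ (univ : Finset (Fin (k + 1)))).image
      (fun p => fun x => if x ∈ O p.1 p.2 then (1 : Fin 2) else 0) with hF'def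
  refine ⟨F', ⟨?_, ?_⟩, ?_⟩
  · -- each new function has exactly m₁ ones
    intro g hg
    rw [hF'def] at hg
    obtain ⟨p, hp, rfl⟩ := Finset.mem_image.mp hg
    have hfilter : (univ.filter fun x : Fin n₁ =>
        (if x ∈ O p.1 p.2 then (1 : Fin 2) else 0) = 1) = O p.1 p.2 := by
      ext x
      simp only [Finset.mem_filter, Finset.mem_univ, true_and]
      constructor
      · intro h
        by_contra hx
        rw [if_neg hx] at h
        exact absurd h (by decide)
      · intro h
        rw [if_pos h]
    show (univ.filter fun x : Fin n₁ =>
        (if x ∈ O p.1 p.2 then (1 : Fin 2) else 0) = 1).card = ⌈α * (n₁ : ℝ)⌉₊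
    rw [hfilter]
    exact (cardO p.1 p.2).trans hm₁def
  · -- covering property
    intro S hS
    -- the translates of E
    set A : Fin (k + 1) → Finset (Fin n₁) :=
      fun j => E.image (fun x => x + c j) with hAdef
    have hEbound : ∀ {x : Fin n₁}, x ∈ E → QN ≤ (x : ℕ) ∧ (x : ℕ) < QN + e := by
      intro x hx
      exact (Finset.mem_filter.mp hx).2
    have key : ∀ (j₁ j₂ : Fin (k + 1)) (x₁ x₂ : Fin n₁), (j₁ : ℕ) < (j₂ : ℕ) →
        x₁ ∈ E → x₂ ∈ E → x₁ + c j₁ = x₂ + c j₂ → False := by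
      intro j₁ j₂ x₁ x₂ hlt hx₁ hx₂ heq
      obtain ⟨hA1, hB1⟩ := hEbound hx₁
      obtain ⟨hA2, hB2⟩ := hEbound hx₂
      have hval : ((x₁ : ℕ) + ((j₁ : ℕ) * e) % n₁) % n₁
          = ((x₂ : ℕ) + ((j₂ : ℕ) * e) % n₁) % n₁ := by
        have h := congrArg Fin.val heq
        simpa [Fin.add_def, hcdef] using h
      have hval2 : ((x₁ : ℕ) + (j₁ : ℕ) * e) % n₁ = ((x₂ : ℕ) + (j₂ : ℕ) * e) % n₁ := by
        rwa [Nat.add_mod_mod, Nat.add_mod_mod] at hval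
      have hepos : 0 < e := by omega
      have hu : (j₁ : ℕ) * e + e ≤ (j₂ : ℕ) * e := by
        have h := Nat.mul_le_mul_right e (Nat.succ_le_of_lt hlt)
        rwa [Nat.succ_mul] at h
      have hu2 : (j₂ : ℕ) * e ≤ k * e :=
        Nat.mul_le_mul_right e (by have := j₂.isLt; omega)
      have hke : k * e + e ≤ n₁ := by
        have hh : k * e + e = (k + 1) * e := by ring
        rw [hh]; exact hk1e
      have hle : (x₁ : ℕ) + (j₁ : ℕ) * e ≤ (x₂ : ℕ) + (j₂ : ℕ) * e := by
        linarith
      have hdvd : n₁ ∣ ((x₂ : ℕ) + (j₂ : ℕ) * e) - ((x₁ : ℕ) + (j₁ : ℕ) * e) :=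
        (Nat.modEq_iff_dvd' hle).mp hval2
      have hltv : (x₁ : ℕ) + (j₁ : ℕ) * e < (x₂ : ℕ) + (j₂ : ℕ) * e := by
        linarith
      have hbig := Nat.le_of_dvd (Nat.sub_pos_of_lt hltv) hdvd
      have hsub : ((x₂ : ℕ) + (j₂ : ℕ) * e) - ((x₁ : ℕ) + (j₁ : ℕ) * e)
          + ((x₁ : ℕ) + (j₁ : ℕ) * e) = (x₂ : ℕ) + (j₂ : ℕ) * e :=
        Nat.sub_add_cancel hle
      have hj1nonneg : 0 ≤ (j₁ : ℕ) * e := Nat.zero_le _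
      linarith
    have hdisjA : ∀ j₁ j₂ : Fin (k + 1), j₁ ≠ j₂ → Disjoint (A j₁) (A j₂) := by
      intro j₁ j₂ hne
      rw [Finset.disjoint_left]
      intro a ha1 ha2
      rw [hAdef] at ha1 ha2
      obtain ⟨x₁, hx₁, hxe₁⟩ := Finset.mem_image.mp ha1
      obtain ⟨x₂, hx₂, hxe₂⟩ := Finset.mem_image.mp ha2
      have heq : x₁ + c j₁ = x₂ + c j₂ := by rw [hxe₁, hxe₂]
      rcases Nat.lt_or_ge (j₁ : ℕ) (j₂ : ℕ) with hlt | hge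
      · exact key j₁ j₂ x₁ x₂ hlt hx₁ hx₂ heq
      · rcases Nat.lt_or_ge (j₂ : ℕ) (j₁ : ℕ) with hlt' | hge'
        · exact key j₂ j₁ x₂ x₁ hlt' hx₂ hx₁ heq.symm
        · exact hne (Fin.ext (le_antisymm hge' hge))
    -- find a translate of E missed by S
    have hEx : ∃ j : Fin (k + 1), Disjoint (A j) S := by
      by_contra hcon
      push_neg at hcon
      have hch : ∀ j : Fin (k + 1), ∃ x, x ∈ A j ∧ x ∈ S := by
        intro j
        exact Finset.not_disjoint_iff.mp (hcon j)
      choose x hxA hxS using hch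
      have hinj : Set.InjOn x (↑(univ : Finset (Fin (k + 1)))) := by
        intro j₁ _ j₂ _ hEq
        by_contra hne
        exact (Finset.disjoint_left.mp (hdisjA j₁ j₂ hne) (hxA j₁)) (hEq ▸ hxA j₂)
      have hcard := Finset.card_le_card_of_injOn x (fun j _ => hxS j) hinj
      rw [hS, Finset.card_univ, Fintype.card_fin] at hcard
      omega
    obtain ⟨j, hj⟩ := hEx
    -- residues of the shifted-back copy of S
    set Q : Finset (Fin n₂) := S.image (fun x : Fin n₁ =>
      (⟨((x - c j : Fin n₁) : ℕ) % n₂, Nat.mod_lt _ hn2pos⟩ : Fin n₂)) with hQdef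
    have hQk : Q.card ≤ k := by
      rw [hQdef]
      exact le_trans Finset.card_image_le (le_of_eq hS)
    obtain ⟨K, hQK, _, hKcard⟩ :=
      Finset.exists_subsuperset_card_eq (Finset.subset_univ Q) hQk
        (by rw [Finset.card_univ, Fintype.card_fin]; exact hkn)
    obtain ⟨f, hfF, hfz⟩ := hF.2 K hKcard
    have hpmem : ((⟨f, hfF⟩ : {x // x ∈ F}), j) ∈ F.attach ×ˢ (univ : Finset (Fin (k + 1))) :=
      Finset.mem_product.mpr ⟨Finset.mem_attach _ _, Finset.mem_univ _⟩
    have hgmem : (fun p : {x // x ∈ F} × Fin (k + 1) =>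
        fun x => if x ∈ O p.1 p.2 then (1 : Fin 2) else 0) (⟨f, hfF⟩, j) ∈ F' := by
      rw [hF'def]
      exact Finset.mem_image_of_mem _ hpmem
    refine ⟨_, hgmem, ?_⟩
    intro x hx
    show (if x ∈ O ⟨f, hfF⟩ j then (1 : Fin 2) else 0) = 0
    have hxnot : x ∉ O ⟨f, hfF⟩ j := by
        intro hmem
        rw [hOdef] at hmem
        obtain ⟨z, hz, hze⟩ := Finset.mem_image.mp hmem
        have hzeq : z = x - c j := eq_sub_of_add_eq hze
        rcases Finset.mem_union.mp hz with hzP | hzE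
        · -- z in trimmed pullback: f is 1 there, but f is 0 on K ⊇ Q
          have hzB := hPsub ⟨f, hfF⟩ hzP
          rw [hBdef, Finset.mem_filter] at hzB
          have hone := hzB.2.2
          have hmemQ : (⟨((x - c j : Fin n₁) : ℕ) % n₂, Nat.mod_lt _ hn2pos⟩ : Fin n₂) ∈ Q := by
            rw [hQdef]
            exact Finset.mem_image_of_mem _ hx
          have hzero := hfz _ (hQK hmemQ)
          rw [hzeq] at hone
          have hone2 : f (⟨((x - c j : Fin n₁) : ℕ) % n₂, Nat.mod_lt _ hn2pos⟩ : Fin n₂) = 1 :=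
            hone
          rw [hone2] at hzero
          exact absurd hzero (by decide)
        · -- z in E: x would be in the translate A j, contradicting disjointness
          have : x ∈ A j := by
            rw [hAdef]
            exact Finset.mem_image.mpr ⟨z, hzE, hze⟩
          exact (Finset.disjoint_left.mp hj this) hx
    rw [if_neg hxnot]
  · -- cardinality bound
    calc F'.card ≤ (F.attach ×ˢ (univ : Finset (Fin (k + 1)))).card := by
          rw [hF'def]; exact Finset.card_image_le
      _ = F.card * (k + 1) := by
          rw [Finset.card_product, Finset.card_attach, Finset.card_univ, Fintype.card_fin]
      _ = (k + 1) * F.card := Nat.mul_comm _ _
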